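/- The forgetful functor U_A : AlgKan → sSet preserves cofibrations and trivial cofibrations: if f is a cofibration in AlgKan then U_A(f) is a monomorphism of simplicial sets, and if f is a trivial cofibration in AlgKan then U_A(f) is an anodyne map. -/

import Mathlib

/-!
Common definitions for formalizing "Algebraic models for higher categories"
(T. Nikolaus, arXiv:1003.1342): algebraic Kan complexes, algebraic
quasi-categories, model structures, Quillen equivalences, local presentability,
anodyne maps, the fundamental ∞-groupoid and the reduced geometric realization.
-/

universe w₂ w v₂ v u₂ u

open CategoryTheory CategoryTheory.Limits Simplicial SSet

namespace AlgebraicModels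

/-- The morphisms having the left lifting property against every morphism in `P`. -/
def llp {C : Type u} [Category.{v} C] (P : MorphismProperty C) : MorphismProperty C :=
  fun _ _ f => ∀ ⦃X Y : C⦄ (g : X ⟶ Y), P g → HasLiftingProperty f g

/-- The morphisms having the right lifting property against every morphism in `P`. -/
def rlp {C : Type u} [Category.{v} C] (P : MorphismProperty C) : MorphismProperty C :=
  fun _ _ f => ∀ ⦃X Y : C⦄ (g : X ⟶ Y), P g → HasLiftingProperty g f

/-- The horn inclusions `(Λ[n, i] : SSet) ⟶ Δ[n]`, `n ≥ 1`, `0 ≤ i ≤ n`. -/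
inductive hornInclusions : ∀ ⦃X Y : SSet.{0}⦄, (X ⟶ Y) → Prop where
  | mk (n : ℕ) (hn : 1 ≤ n) (i : Fin (n + 1)) : hornInclusions (Λ[n, i].ι)

/-- The inner horn inclusions `(Λ[n, i] : SSet) ⟶ Δ[n]`, `0 < i < n` (hence `n ≥ 2`). -/
inductive innerHornInclusions : ∀ ⦃X Y : SSet.{0}⦄, (X ⟶ Y) → Prop where
  | mk (n : ℕ) (i : Fin (n + 1)) (h0 : 0 < i.val) (hn : i.val < n) :
      innerHornInclusions (Λ[n, i].ι)

/-- The boundary inclusions `∂Δ[n] ⟶ Δ[n]`. -/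
inductive boundaryInclusions : ∀ ⦃X Y : SSet.{0}⦄, (X ⟶ Y) → Prop where
  | mk (n : ℕ) : boundaryInclusions (∂Δ[n].ι)

/-- Anodyne maps: the weakly saturated class generated by the horn inclusions,
characterized (via the small object argument) as the maps having the left lifting
property against every map with the right lifting property against all horn
inclusions; these are the trivial cofibrations of the Kan–Quillen model structure. -/
def anodyne : MorphismProperty SSet.{0} := llp (rlp (fun _ _ f => hornInclusions f))

/-- Inner anodyne maps: the weakly saturated class generated by the inner horn
inclusions. -/
def innerAnodyne : MorphismProperty SSet.{0} :=
  llp (rlp (fun _ _ f => innerHornInclusions f))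

/-- Kan fibrations: right lifting property against all horn inclusions. -/
def kanFibration : MorphismProperty SSet.{0} := rlp (fun _ _ f => hornInclusions f)

/-- Trivial Kan fibrations: right lifting property against all boundary inclusions. -/
def trivialKanFibration : MorphismProperty SSet.{0} :=
  rlp (fun _ _ f => boundaryInclusions f)

/-- Weak homotopy equivalences of simplicial sets, characterized as the maps
factoring as an anodyne map followed by a trivial Kan fibration (this is exactly the
class of weak equivalences of the Kan–Quillen model structure on `SSet`). -/
def weakHomotopyEquiv : MorphismProperty SSet.{0} := fun X Y f =>
  ∃ (Z : SSet.{0}) (i : X ⟶ Z) (p : Z ⟶ Y), anodyne i ∧ trivialKanFibration p ∧ i ≫ p = f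

/-- An algebraic Kan complex: a simplicial set with a distinguished filler for every
horn `(Λ[n, i] : SSet) ⟶ X`, `n ≥ 1`, `0 ≤ i ≤ n`. -/
structure AlgKan : Type 1 where
  carrier : SSet.{0}
  filler : ∀ ⦃n : ℕ⦄ (i : Fin (n + 1)), 1 ≤ n → ((Λ[n, i] : SSet) ⟶ carrier) → (Δ[n] ⟶ carrier)
  filler_spec : ∀ ⦃n : ℕ⦄ (i : Fin (n + 1)) (hn : 1 ≤ n) (h : (Λ[n, i] : SSet) ⟶ carrier),
    Λ[n, i].ι ≫ filler i hn h = h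

namespace AlgKan

/-- Morphisms of algebraic Kan complexes: simplicial maps preserving the
distinguished fillers. -/
@[ext]
structure Hom (X Y : AlgKan) where
  map : X.carrier ⟶ Y.carrier
  preserves : ∀ ⦃n : ℕ⦄ (i : Fin (n + 1)) (hn : 1 ≤ n) (h : (Λ[n, i] : SSet) ⟶ X.carrier),
    X.filler i hn h ≫ map = Y.filler i hn (h ≫ map)

instance : Category.{0} AlgKan where
  Hom := Hom
  id X := ⟨𝟙 X.carrier, fun n i hn h => by simp⟩
  comp {X Y Z} f g := ⟨f.map ≫ g.map, fun n i hn h => by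
    rw [← Category.assoc, f.preserves, g.preserves, Category.assoc]⟩
  id_comp f := Hom.ext (Category.id_comp f.map)
  comp_id f := Hom.ext (Category.comp_id f.map)
  assoc f g h := Hom.ext (Category.assoc f.map g.map h.map)

@[simp] lemma id_map (X : AlgKan) : Hom.map (𝟙 X) = 𝟙 X.carrier := rfl

@[simp] lemma comp_map {X Y Z : AlgKan} (f : X ⟶ Y) (g : Y ⟶ Z) :
    Hom.map (f ≫ g) = f.map ≫ g.map := rfl

end AlgKan

/-- The forgetful functor from algebraic Kan complexes to simplicial sets. -/
def UA : AlgKan ⥤ SSet.{0} where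
  obj X := X.carrier
  map f := f.map

/-- An algebraic quasi-category: a simplicial set with a distinguished filler for
every inner horn `(Λ[n, i] : SSet) ⟶ X`, `0 < i < n`. -/
structure AlgQ : Type 1 where
  carrier : SSet.{0}
  filler : ∀ ⦃n : ℕ⦄ (i : Fin (n + 1)), 0 < i.val → i.val < n →
    ((Λ[n, i] : SSet) ⟶ carrier) → (Δ[n] ⟶ carrier)
  filler_spec : ∀ ⦃n : ℕ⦄ (i : Fin (n + 1)) (h0 : 0 < i.val) (hn : i.val < n)
    (h : (Λ[n, i] : SSet) ⟶ carrier), Λ[n, i].ι ≫ filler i h0 hn h = h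

namespace AlgQ

/-- Morphisms of algebraic quasi-categories: simplicial maps preserving the
distinguished fillers. -/
@[ext]
structure Hom (X Y : AlgQ) where
  map : X.carrier ⟶ Y.carrier
  preserves : ∀ ⦃n : ℕ⦄ (i : Fin (n + 1)) (h0 : 0 < i.val) (hn : i.val < n)
    (h : (Λ[n, i] : SSet) ⟶ X.carrier),
    X.filler i h0 hn h ≫ map = Y.filler i h0 hn (h ≫ map)

instance : Category.{0} AlgQ where
  Hom := Hom
  id X := ⟨𝟙 X.carrier, fun n i h0 hn h => by simp⟩
  comp {X Y Z} f g := ⟨f.map ≫ g.map, fun n i h0 hn h => by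
    rw [← Category.assoc, f.preserves, g.preserves, Category.assoc]⟩
  id_comp f := Hom.ext (Category.id_comp f.map)
  comp_id f := Hom.ext (Category.comp_id f.map)
  assoc f g h := Hom.ext (Category.assoc f.map g.map h.map)

@[simp] lemma id_map (X : AlgQ) : Hom.map (𝟙 X) = 𝟙 X.carrier := rfl

@[simp] lemma comp_map {X Y Z : AlgQ} (f : X ⟶ Y) (g : Y ⟶ Z) :
    Hom.map (f ≫ g) = f.map ≫ g.map := rfl

end AlgQ

/-- The forgetful functor from algebraic quasi-categories to simplicial sets. -/
def UQ : AlgQ ⥤ SSet.{0} where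
  obj X := X.carrier
  map f := f.map

/-- A (closed) model structure on a category: classes of weak equivalences,
cofibrations and fibrations on a complete and cocomplete category, satisfying
Quillen's axioms (two-out-of-three, closure under retracts, the lifting axioms
and the factorization axioms). -/
structure ModelStructure (C : Type u) [Category.{v} C] where
  weq : MorphismProperty C
  cof : MorphismProperty C
  fib : MorphismProperty C
  hasLimits : HasLimitsOfSize.{v, v} C
  hasColimits : HasColimitsOfSize.{v, v} C
  weq_comp : ∀ ⦃X Y Z : C⦄ (f : X ⟶ Y) (g : Y ⟶ Z), weq f → weq g → weq (f ≫ g)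
  weq_of_comp_left : ∀ ⦃X Y Z : C⦄ (f : X ⟶ Y) (g : Y ⟶ Z), weq f → weq (f ≫ g) → weq g
  weq_of_comp_right : ∀ ⦃X Y Z : C⦄ (f : X ⟶ Y) (g : Y ⟶ Z), weq g → weq (f ≫ g) → weq f
  weq_retract : ∀ ⦃X Y A B : C⦄ (f : X ⟶ Y) (g : A ⟶ B)
    (i : Arrow.mk f ⟶ Arrow.mk g) (r : Arrow.mk g ⟶ Arrow.mk f),
    i ≫ r = 𝟙 (Arrow.mk f) → weq g → weq f
  cof_retract : ∀ ⦃X Y A B : C⦄ (f : X ⟶ Y) (g : A ⟶ B)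
    (i : Arrow.mk f ⟶ Arrow.mk g) (r : Arrow.mk g ⟶ Arrow.mk f),
    i ≫ r = 𝟙 (Arrow.mk f) → cof g → cof f
  fib_retract : ∀ ⦃X Y A B : C⦄ (f : X ⟶ Y) (g : A ⟶ B)
    (i : Arrow.mk f ⟶ Arrow.mk g) (r : Arrow.mk g ⟶ Arrow.mk f),
    i ≫ r = 𝟙 (Arrow.mk f) → fib g → fib f
  lifting_trivCof_fib : ∀ ⦃A B X Y : C⦄ (i : A ⟶ B) (p : X ⟶ Y),
    cof i → weq i → fib p → HasLiftingProperty i p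
  lifting_cof_trivFib : ∀ ⦃A B X Y : C⦄ (i : A ⟶ B) (p : X ⟶ Y),
    cof i → fib p → weq p → HasLiftingProperty i p
  factor_trivCof_fib : ∀ ⦃X Y : C⦄ (f : X ⟶ Y), ∃ (Z : C) (i : X ⟶ Z) (p : Z ⟶ Y),
    cof i ∧ weq i ∧ fib p ∧ i ≫ p = f
  factor_cof_trivFib : ∀ ⦃X Y : C⦄ (f : X ⟶ Y), ∃ (Z : C) (i : X ⟶ Z) (p : Z ⟶ Y),
    cof i ∧ fib p ∧ weq p ∧ i ≫ p = f

namespace ModelStructure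

variable {C : Type u} [Category.{v} C] (M : ModelStructure C)

/-- The trivial cofibrations of a model structure. -/
def trivCof : MorphismProperty C := fun _ _ f => M.cof f ∧ M.weq f

/-- The trivial fibrations of a model structure. -/
def trivFib : MorphismProperty C := fun _ _ f => M.fib f ∧ M.weq f

/-- An object is fibrant iff every morphism from the source of a trivial cofibration
to it extends along the trivial cofibration (equivalently, the map to the terminal
object is a fibration). -/
def IsFibrant (X : C) : Prop :=
  ∀ ⦃A B : C⦄ (i : A ⟶ B), M.cof i → M.weq i → ∀ u : A ⟶ X, ∃ v : B ⟶ X, i ≫ v = u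

/-- An object is cofibrant iff every morphism from it lifts through any trivial
fibration (equivalently, the map from the initial object is a cofibration). -/
def IsCofibrant (X : C) : Prop :=
  ∀ ⦃E B : C⦄ (p : E ⟶ B), M.fib p → M.weq p → ∀ u : X ⟶ B, ∃ v : X ⟶ E, v ≫ p = u

/-- A model structure is cofibrantly generated by a class `I` of generating
cofibrations and a class `J` of generating trivial cofibrations if the cofibrations
are exactly `llp (rlp I)` and the trivial cofibrations are exactly `llp (rlp J)`. -/
def IsCofibrantlyGenerated (I J : MorphismProperty C) : Prop :=
  M.cof = llp (rlp I) ∧ M.trivCof = llp (rlp J)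

/-- Right properness: the pullback of a weak equivalence along a fibration is a weak
equivalence. -/
def RightProper : Prop :=
  ∀ ⦃X Y Z : C⦄ (f : X ⟶ Z) (g : Y ⟶ Z) (c : PullbackCone f g),
    IsLimit c → M.fib f → M.weq g → M.weq c.fst

end ModelStructure

/-- A Quillen adjunction, expressed through its left adjoint: the left adjoint
preserves cofibrations and trivial cofibrations. -/
def IsQuillenAdjunction {C : Type u} [Category.{v} C] {D : Type u₂} [Category.{v₂} D]
    (MC : ModelStructure C) (MD : ModelStructure D) (F : C ⥤ D) : Prop :=
  (∀ ⦃X Y : C⦄ (f : X ⟶ Y), MC.cof f → MD.cof (F.map f)) ∧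
  (∀ ⦃X Y : C⦄ (f : X ⟶ Y), MC.cof f → MC.weq f → MD.cof (F.map f) ∧ MD.weq (F.map f))

/-- A Quillen equivalence: a Quillen adjunction such that for every cofibrant `X` and
every fibrant `Y`, a map `F.obj X ⟶ Y` is a weak equivalence iff its adjunct
`X ⟶ G.obj Y` is a weak equivalence. -/
def IsQuillenEquivalence {C : Type u} [Category.{v} C] {D : Type u₂} [Category.{v₂} D]
    (MC : ModelStructure C) (MD : ModelStructure D)
    (F : C ⥤ D) (G : D ⥤ C) (adj : F ⊣ G) : Prop :=
  IsQuillenAdjunction MC MD F ∧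
  ∀ (X : C) (Y : D), MC.IsCofibrant X → MD.IsFibrant Y →
    ∀ f : F.obj X ⟶ Y, MD.weq f ↔ MC.weq ((adj.homEquiv X Y) f)

/-- A category is `κ`-filtered if every diagram of size `< κ` in it admits a cocone. -/
def IsCardinalFiltered (J : Type v) [Category.{v} J] (κ : Cardinal.{v}) : Prop :=
  ∀ (K : Type v) [Category.{v} K] (F : K ⥤ J),
    Cardinal.mk (Arrow K) < κ → Nonempty (Cocone F)

/-- An object `A` is `κ`-presentable (`κ`-small) if `Hom(A, -)` preserves `κ`-filtered
colimits. -/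
def IsPresentableObj {C : Type u} [Category.{v} C] (κ : Cardinal.{v}) (A : C) : Prop :=
  ∀ (J : Type v) [Category.{v} J], IsCardinalFiltered J κ →
    Nonempty (PreservesColimitsOfShape J (coyoneda.obj (Opposite.op A)))

/-- A category is locally presentable if it is cocomplete and there is a small family
of `κ`-presentable objects (for some regular cardinal `κ`) such that every object is a
`κ`-filtered colimit of objects of this family. -/
def IsLocallyPresentable (C : Type u) [Category.{v} C] : Prop :=
  HasColimitsOfSize.{v, v} C ∧
  ∃ κ : Cardinal.{v}, κ.IsRegular ∧
    ∃ (ι : Type v) (G : ι → C),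
      (∀ i, IsPresentableObj κ (G i)) ∧
      ∀ X : C, ∃ (J : Cat.{v, v}) (_ : IsCardinalFiltered J κ) (D : J ⥤ C) (c : Cocone D),
        (∀ j : J, ∃ i : ι, Nonempty (D.obj j ≅ G i)) ∧
        Nonempty (IsColimit c) ∧ Nonempty (c.pt ≅ X)

/-- The forgetful functor from algebraic Kan complexes to algebraic quasi-categories:
it forgets the distinguished fillers of the outer horns (and keeps those of the inner
horns), so that `V ⋙ UQ = UA`. -/
def V : AlgKan ⥤ AlgQ where
  obj X :=
    { carrier := X.carrier
      filler := fun n i h0 hn h => X.filler i (by omega) h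
      filler_spec := fun n i h0 hn h => X.filler_spec i (by omega) h }
  map {X Y} f :=
    { map := f.map
      preserves := fun n i h0 hn h => f.preserves i (by omega) h }
  map_id X := AlgQ.Hom.ext rfl
  map_comp f g := AlgQ.Hom.ext rfl

/-- The image `{ F.map (∂Δ[n] ⟶ Δ[n]) | n ≥ 1 }` of the boundary inclusions with
`n ≥ 1` under a functor `F : SSet ⥤ D`. -/
inductive imageBoundaryInclusions {D : Type u} [Category.{v} D] (F : SSet.{0} ⥤ D) :
    ∀ ⦃X Y : D⦄, (X ⟶ Y) → Prop where
  | mk (n : ℕ) (hn : 1 ≤ n) : imageBoundaryInclusions F (F.map (∂Δ[n].ι))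

/-- The image `{ F.map ((Λ[n, i] : SSet) ⟶ Δ[n]) | n ≥ 1, 0 ≤ i ≤ n }` of the horn inclusions
under a functor `F : SSet ⥤ D`. -/
inductive imageHornInclusions {D : Type u} [Category.{v} D] (F : SSet.{0} ⥤ D) :
    ∀ ⦃X Y : D⦄, (X ⟶ Y) → Prop where
  | mk (n : ℕ) (hn : 1 ≤ n) (i : Fin (n + 1)) :
      imageHornInclusions F (F.map (Λ[n, i].ι))

/-- The geometric realizations of the horn inclusions. -/
inductive topHornInclusions : ∀ ⦃X Y : TopCat.{0}⦄, (X ⟶ Y) → Prop where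
  | mk (n : ℕ) (hn : 1 ≤ n) (i : Fin (n + 1)) :
      topHornInclusions (SSet.toTop.map (Λ[n, i].ι))

/-- The geometric realizations of the boundary inclusions. -/
inductive topBoundaryInclusions : ∀ ⦃X Y : TopCat.{0}⦄, (X ⟶ Y) → Prop where
  | mk (n : ℕ) : topBoundaryInclusions (SSet.toTop.map (∂Δ[n].ι))

/-- Serre fibrations: right lifting property against the realized horn inclusions. -/
def serreFibration : MorphismProperty TopCat.{0} := rlp (fun _ _ f => topHornInclusions f)

/-- Trivial Serre fibrations. -/
def topTrivialFibration : MorphismProperty TopCat.{0} :=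
  rlp (fun _ _ f => topBoundaryInclusions f)

/-- Trivial cofibrations of the Quillen model structure on `Top`. -/
def topTrivialCofibration : MorphismProperty TopCat.{0} :=
  llp (rlp (fun _ _ f => topHornInclusions f))

/-- Weak homotopy equivalences of topological spaces, characterized as the maps
factoring as a trivial cofibration followed by a trivial fibration of the Quillen
model structure on `Top`. -/
def topWeakEquiv : MorphismProperty TopCat.{0} := fun X Y f =>
  ∃ (Z : TopCat.{0}) (i : X ⟶ Z) (p : Z ⟶ Y),
    topTrivialCofibration i ∧ topTrivialFibration p ∧ i ≫ p = f

/-- A choice, for every `n ≥ 1` and `0 ≤ i ≤ n`, of a continuous retraction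
`R(n,i) : |Δ[n]| ⟶ |Λ[n,i]|` of the inclusion of the geometric horn into the
geometric `n`-simplex. -/
structure HornRetractions where
  r : ∀ (n : ℕ) (i : Fin (n + 1)), 1 ≤ n → (SSet.toTop.obj Δ[n] ⟶ SSet.toTop.obj Λ[n, i])
  retraction : ∀ (n : ℕ) (i : Fin (n + 1)) (hn : 1 ≤ n),
    SSet.toTop.map (Λ[n, i].ι) ≫ r n i hn = 𝟙 (SSet.toTop.obj Λ[n, i])

/-- The fundamental `∞`-groupoid of a topological space `M`: the singular simplicial
set `Sing M` with the distinguished filler of a horn `h` given by the adjunct of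
`(adjunct of h) ∘ R(n,i)`. -/
noncomputable def ASingObj (R : HornRetractions) (M : TopCat.{0}) : AlgKan where
  carrier := TopCat.toSSet.obj M
  filler := fun n i hn h =>
    (sSetTopAdj.homEquiv Δ[n] M) (R.r n i hn ≫ (sSetTopAdj.homEquiv Λ[n, i] M).symm h)
  filler_spec := fun n i hn h => by
    rw [← Adjunction.homEquiv_naturality_left, ← Category.assoc, R.retraction,
      Category.id_comp, Equiv.apply_symm_apply]

/-- The fundamental `∞`-groupoid functor `ASing : Top ⥤ AlgKan` associated with the
chosen retractions. -/
noncomputable def ASing (R : HornRetractions) : TopCat.{0} ⥤ AlgKan where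
  obj M := ASingObj R M
  map {M N} f :=
    { map := TopCat.toSSet.map f
      preserves := fun n i hn h => by
        dsimp [ASingObj]
        rw [← Adjunction.homEquiv_naturality_right, Category.assoc]
        erw [Adjunction.homEquiv_naturality_right_symm] }
  map_id M := AlgKan.Hom.ext (TopCat.toSSet.map_id M)
  map_comp f g := AlgKan.Hom.ext (TopCat.toSSet.map_comp f g)

/-- The index type of all horns of an algebraic Kan complex. -/
structure HornIndex (X : AlgKan) : Type where
  n : ℕ
  i : Fin (n + 1)
  hn : 1 ≤ n
  h : (Λ[n, i] : SSet) ⟶ X.carrier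

/-- The reduced geometric realization of an algebraic Kan complex: the coequalizer,
over all horns `h : Λ[n,i] ⟶ X`, of the realization of the distinguished filler of
`h` against the realization of `h` precomposed with the retraction `R(n,i)`. -/
noncomputable def realReducedObj (R : HornRetractions) (X : AlgKan) : TopCat.{0} :=
  coequalizer
    (Sigma.desc fun k : HornIndex X => SSet.toTop.map (X.filler k.i k.hn k.h))
    (Sigma.desc fun k : HornIndex X => R.r k.n k.i k.hn ≫ SSet.toTop.map k.h)

/-- The reduced geometric realization functor `|·|_r : AlgKan ⥤ Top`. -/
noncomputable def realReduced (R : HornRetractions) : AlgKan ⥤ TopCat.{0} where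
  obj X := realReducedObj R X
  map {X Y} f := coequalizer.desc (SSet.toTop.map f.map ≫ coequalizer.π _ _) (by
    apply Sigma.hom_ext
    intro k
    simp only [colimit.ι_desc_assoc, Cofan.mk_ι_app]
    erw [← Functor.map_comp_assoc, f.preserves k.i k.hn k.h]
    have h2 := Limits.Sigma.ι (fun k : HornIndex Y => SSet.toTop.obj Δ[k.n])
        (⟨k.n, k.i, k.hn, k.h ≫ f.map⟩ : HornIndex Y) ≫=
      coequalizer.condition
        (Sigma.desc fun k : HornIndex Y => SSet.toTop.map (Y.filler k.i k.hn k.h))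
        (Sigma.desc fun k : HornIndex Y => R.r k.n k.i k.hn ≫ SSet.toTop.map k.h)
    simp only [colimit.ι_desc_assoc, Cofan.mk_ι_app] at h2
    simp only [Functor.map_comp, Category.assoc] at h2 ⊢
    exact h2)
  map_id X := by
    dsimp only [realReducedObj]
    apply coequalizer.hom_ext
    simp [realReducedObj]
  map_comp f g := by
    dsimp only [realReducedObj]
    apply coequalizer.hom_ext
    simp [realReducedObj]
    erw [Cofork.π_ofπ, Category.assoc, coequalizer.π_desc]


section Aux

open Opposite

attribute [local instance] Classical.propDecidable

/-- The "codiscrete" simplicial set on a family of sets indexed by objects of the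
simplex category. -/
def codisc (S : SimplexCategory → Type) : SSet.{0} where
  obj m := ∀ c : SimplexCategory, (c ⟶ m.unop) → S c
  map f := TypeCat.ofHom fun g c β => g c (β ≫ f.unop)
  map_id m := by refine ConcreteCategory.hom_ext _ _ (fun g => ?_); funext c β; simp
  map_comp f g := by refine ConcreteCategory.hom_ext _ _ (fun x => ?_); funext c β; simp

/-- Maps into `codisc S` from families of functions. -/
def toCodisc {L : SSet.{0}} {S : SimplexCategory → Type}
    (ψ : ∀ c : SimplexCategory, L.obj (op c) → S c) : L ⟶ codisc S where
  app m := TypeCat.ofHom fun x => fun c β => ψ c (L.map β.op x)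
  naturality m m' f := by
    refine ConcreteCategory.hom_ext _ _ (fun x => ?_)
    funext c β
    show ψ c (L.map β.op (L.map f x)) = ψ c (L.map (β ≫ f.unop).op x)
    rw [op_comp, Quiver.Hom.op_unop, Functor.map_comp_apply]

/-- Extension of a map into `codisc S` along a levelwise injective map. -/
noncomputable def extendCodisc {A B : SSet.{0}} (j : A ⟶ B)
    {S : SimplexCategory → Type} [∀ c, Nonempty (S c)]
    (φ : A ⟶ codisc S) : B ⟶ codisc S :=
  toCodisc (fun c b =>
    if h : ∃ a, j.app (op c) a = b then (φ.app (op c) h.choose : ∀ c' : SimplexCategory, (c' ⟶ c) → S c') c (𝟙 c)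
    else Classical.arbitrary _)

lemma extendCodisc_fac {A B : SSet.{0}} (j : A ⟶ B)
    (hj : ∀ m, Function.Injective (j.app m))
    {S : SimplexCategory → Type} [∀ c, Nonempty (S c)]
    (φ : A ⟶ codisc S) : j ≫ extendCodisc j φ = φ := by
  apply NatTrans.ext
  funext m
  refine ConcreteCategory.hom_ext _ _ (fun x => ?_)
  funext c β
  show (if h : ∃ a, j.app (op c) a = B.map β.op (j.app m x)
    then (φ.app (op c) h.choose : ∀ c' : SimplexCategory, (c' ⟶ c) → S c') c (𝟙 c)
    else Classical.arbitrary _) =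
      (φ.app m x : ∀ c' : SimplexCategory, (c' ⟶ m.unop) → S c') c β
  have hmem : ∃ a, j.app (op c) a = B.map β.op (j.app m x) :=
    ⟨A.map β.op x, NatTrans.naturality_apply j β.op x⟩
  rw [dif_pos hmem]
  have hc : hmem.choose = A.map β.op x :=
    hj _ (hmem.choose_spec.trans (NatTrans.naturality_apply j β.op x).symm)
  rw [hc, NatTrans.naturality_apply φ β.op x]
  show (φ.app m x : ∀ c' : SimplexCategory, (c' ⟶ m.unop) → S c') c (𝟙 c ≫ β) = _
  rw [Category.id_comp]

lemma horn_app_injective (n : ℕ) (i : Fin (n + 1)) (m : SimplexCategoryᵒᵖ) :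
    Function.Injective ((Λ[n, i].ι).app m) := fun _ _ h => Subtype.ext h

lemma boundary_app_injective (n : ℕ) (m : SimplexCategoryᵒᵖ) :
    Function.Injective ((∂Δ[n].ι).app m) := fun _ _ h => Subtype.ext h

/-- The constant singleton family. -/
abbrev ptS : SimplexCategory → Type := fun _ => PUnit

/-- The unique map to the point. -/
def toPt (L : SSet.{0}) : L ⟶ codisc ptS := toCodisc fun _ _ => PUnit.unit

lemma pt_hom_eq {L : SSet.{0}} (a b : L ⟶ codisc ptS) : a = b := by
  apply NatTrans.ext
  funext m
  refine ConcreteCategory.hom_ext _ _ (fun x => ?_)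
  funext c β
  exact Subsingleton.elim _ _

lemma hasLiftingProperty_toPt {A B : SSet.{0}} (j : A ⟶ B)
    (hj : ∀ m, Function.Injective (j.app m))
    {S : SimplexCategory → Type} [∀ c, Nonempty (S c)] :
    HasLiftingProperty j (toPt (codisc S)) where
  sq_hasLift {t b} sq :=
    ⟨⟨{ l := extendCodisc j t
        fac_left := extendCodisc_fac j hj t
        fac_right := pt_hom_eq _ _ }⟩⟩

/-- The family of optional simplices of a simplicial set. -/
abbrev optS (Xc : SSet.{0}) : SimplexCategory → Type := fun c => Option (Xc.obj (op c))

/-- The levelwise injective map from `Xc` into its codiscrete envelope. -/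
def unitCodisc (Xc : SSet.{0}) : Xc ⟶ codisc (optS Xc) := toCodisc fun _ x => some x

lemma unit_app_injective (Xc : SSet.{0}) (m : SimplexCategoryᵒᵖ) :
    Function.Injective ((unitCodisc Xc).app m) := by
  intro a b h
  have h2 := congrArg (fun g : (∀ c : SimplexCategory, (c ⟶ m.unop) → Option (Xc.obj (op c))) =>
    g m.unop (𝟙 m.unop)) h
  change some (Xc.map (𝟙 m.unop).op a) = some (Xc.map (𝟙 m.unop).op b) at h2
  simpa [TypeCat.Fun.mk_apply] using h2

lemma cancel_unit {Xc L : SSet.{0}} {g h : L ⟶ Xc}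
    (H : g ≫ unitCodisc Xc = h ≫ unitCodisc Xc) : g = h := by
  apply NatTrans.ext
  funext m
  refine ConcreteCategory.hom_ext _ _ (fun x => ?_)
  exact unit_app_injective Xc m (ConcreteCategory.congr_hom (NatTrans.congr_app H m) x)

lemma mono_unit (Xc : SSet.{0}) : Mono (unitCodisc Xc) :=
  ⟨fun _ _ H => cancel_unit H⟩

/-- The codiscrete envelope of an algebraic Kan complex, with fillers chosen
compatibly with those of `X` along `unitCodisc`. -/
noncomputable def ZAlg (X : AlgKan) : AlgKan where
  carrier := codisc (optS X.carrier)
  filler n i hn h :=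
    if hh : ∃ h' : (Λ[n, i] : SSet) ⟶ X.carrier, h = h' ≫ unitCodisc X.carrier
    then X.filler i hn hh.choose ≫ unitCodisc X.carrier
    else extendCodisc (Λ[n, i].ι) h
  filler_spec n i hn h := by
    by_cases hh : ∃ h' : (Λ[n, i] : SSet) ⟶ X.carrier, h = h' ≫ unitCodisc X.carrier
    · simp only [dif_pos hh]
      rw [← Category.assoc, X.filler_spec]
      exact hh.choose_spec.symm
    · simp only [dif_neg hh]
      exact extendCodisc_fac _ (horn_app_injective n i) h

/-- The terminal algebraic Kan complex. -/
def TAlg : AlgKan where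
  carrier := codisc ptS
  filler _ _ _ _ := toPt _
  filler_spec _ _ _ _ := pt_hom_eq _ _

/-- The unique map to the terminal algebraic Kan complex. -/
def toTAlg (A : AlgKan) : A ⟶ TAlg where
  map := toPt A.carrier
  preserves _ _ _ _ := pt_hom_eq _ _

/-- The projection of the codiscrete envelope to the point, as a morphism of
algebraic Kan complexes. -/
noncomputable def pAlgZT (X : AlgKan) : ZAlg X ⟶ TAlg where
  map := toPt _
  preserves _ _ _ _ := pt_hom_eq _ _

/-- The unit as a morphism of algebraic Kan complexes. -/
noncomputable def uAlg (X : AlgKan) : X ⟶ ZAlg X where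
  map := unitCodisc X.carrier
  preserves n i hn h := by
    have hh : ∃ h' : (Λ[n, i] : SSet) ⟶ X.carrier,
        h ≫ unitCodisc X.carrier = h' ≫ unitCodisc X.carrier := ⟨h, rfl⟩
    dsimp only [ZAlg]
    simp only [dif_pos hh]
    have hc : hh.choose = h := (cancel_unit hh.choose_spec).symm
    rw [hc]

/-- The concrete pullback of `q` along `v`. -/
def pb {Zc Wc Yc : SSet.{0}} (q : Zc ⟶ Wc) (v : Yc ⟶ Wc) : SSet.{0} where
  obj m := { zy : Zc.obj m × Yc.obj m // q.app m zy.1 = v.app m zy.2 }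
  map {m m'} g := TypeCat.ofHom fun x => ⟨(Zc.map g x.1.1, Yc.map g x.1.2), by
    rw [FunctorToTypes.naturality, FunctorToTypes.naturality, x.2]⟩
  map_id m := by
    refine ConcreteCategory.hom_ext _ _ (fun x => ?_)
    apply Subtype.ext
    simp
  map_comp g g' := by
    refine ConcreteCategory.hom_ext _ _ (fun x => ?_)
    apply Subtype.ext
    simp

/-- First projection of the pullback. -/
def pbFst {Zc Wc Yc : SSet.{0}} (q : Zc ⟶ Wc) (v : Yc ⟶ Wc) : pb q v ⟶ Zc where
  app m := TypeCat.ofHom fun x => x.1.1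
  naturality _ _ _ := rfl

/-- Second projection of the pullback. -/
def pbSnd {Zc Wc Yc : SSet.{0}} (q : Zc ⟶ Wc) (v : Yc ⟶ Wc) : pb q v ⟶ Yc where
  app m := TypeCat.ofHom fun x => x.1.2
  naturality _ _ _ := rfl

lemma pb_w {Zc Wc Yc : SSet.{0}} (q : Zc ⟶ Wc) (v : Yc ⟶ Wc) :
    pbFst q v ≫ q = pbSnd q v ≫ v := by
  apply NatTrans.ext
  funext m
  refine ConcreteCategory.hom_ext _ _ (fun x => ?_)
  exact x.2

/-- Pairing into the pullback. -/
def pbPair {L Zc Wc Yc : SSet.{0}} (q : Zc ⟶ Wc) (v : Yc ⟶ Wc) (a : L ⟶ Zc)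
    (b : L ⟶ Yc) (hab : a ≫ q = b ≫ v) : L ⟶ pb q v where
  app m := TypeCat.ofHom fun x =>
    ⟨(a.app m x, b.app m x), ConcreteCategory.congr_hom (NatTrans.congr_app hab m) x⟩
  naturality m m' g := by
    refine ConcreteCategory.hom_ext _ _ (fun x => ?_)
    apply Subtype.ext
    show ((a.app m' (L.map g x), b.app m' (L.map g x)) : Zc.obj m' × Yc.obj m') =
      (Zc.map g (a.app m x), Yc.map g (b.app m x))
    rw [NatTrans.naturality_apply, NatTrans.naturality_apply]

@[simp] lemma pbPair_fst {L Zc Wc Yc : SSet.{0}} (q : Zc ⟶ Wc) (v : Yc ⟶ Wc)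
    (a : L ⟶ Zc) (b : L ⟶ Yc) (hab : a ≫ q = b ≫ v) :
    pbPair q v a b hab ≫ pbFst q v = a := rfl

@[simp] lemma pbPair_snd {L Zc Wc Yc : SSet.{0}} (q : Zc ⟶ Wc) (v : Yc ⟶ Wc)
    (a : L ⟶ Zc) (b : L ⟶ Yc) (hab : a ≫ q = b ≫ v) :
    pbPair q v a b hab ≫ pbSnd q v = b := rfl

lemma pb_hom_ext {L Zc Wc Yc : SSet.{0}} {q : Zc ⟶ Wc} {v : Yc ⟶ Wc}
    {g h : L ⟶ pb q v} (h1 : g ≫ pbFst q v = h ≫ pbFst q v)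
    (h2 : g ≫ pbSnd q v = h ≫ pbSnd q v) : g = h := by
  apply NatTrans.ext
  funext m
  refine ConcreteCategory.hom_ext _ _ (fun x => ?_)
  apply Subtype.ext
  apply Prod.ext
  · exact ConcreteCategory.congr_hom (NatTrans.congr_app h1 m) x
  · exact ConcreteCategory.congr_hom (NatTrans.congr_app h2 m) x

lemma pb_snd_lift {A B Zc Wc Yc : SSet.{0}} (q : Zc ⟶ Wc) (v : Yc ⟶ Wc)
    (j : A ⟶ B) [HasLiftingProperty j q] : HasLiftingProperty j (pbSnd q v) where
  sq_hasLift {t b} sq := by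
    have sq' : CommSq (t ≫ pbFst q v) j q (b ≫ v) := ⟨by
      rw [Category.assoc, pb_w q v, ← Category.assoc, sq.w, Category.assoc]⟩
    exact ⟨⟨{ l := pbPair q v sq'.lift b sq'.fac_right
              fac_left := pb_hom_ext
                (by rw [Category.assoc, pbPair_fst, sq'.fac_left])
                (by rw [Category.assoc, pbPair_snd, ← sq.w])
              fac_right := pbPair_snd _ _ _ _ _ }⟩⟩

/-- The distinguished filler on the pullback, in the case where the horn does not
factor through `X`. -/
noncomputable def pbFill {Zc Wc : SSet.{0}} (Y : AlgKan) (q : Zc ⟶ Wc)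
    (v : Y.carrier ⟶ Wc)
    (hq : ∀ ⦃A B : SSet.{0}⦄ (j : A ⟶ B), hornInclusions j → HasLiftingProperty j q)
    {n : ℕ} (i : Fin (n + 1)) (hn : 1 ≤ n) (h : (Λ[n, i] : SSet) ⟶ pb q v) : Δ[n] ⟶ pb q v :=
  haveI : HasLiftingProperty (Λ[n, i].ι) q :=
    hq _ (hornInclusions.mk n hn i)
  haveI := pb_snd_lift q v (Λ[n, i].ι)
  ((CommSq.mk (Y.filler_spec i hn (h ≫ pbSnd q v)).symm :
    CommSq h (Λ[n, i].ι) (pbSnd q v) (Y.filler i hn (h ≫ pbSnd q v)))).lift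

lemma pbFill_comm {Zc Wc : SSet.{0}} (Y : AlgKan) (q : Zc ⟶ Wc) (v : Y.carrier ⟶ Wc)
    (hq : ∀ ⦃A B : SSet.{0}⦄ (j : A ⟶ B), hornInclusions j → HasLiftingProperty j q)
    {n : ℕ} (i : Fin (n + 1)) (hn : 1 ≤ n) (h : (Λ[n, i] : SSet) ⟶ pb q v) :
    Λ[n, i].ι ≫ pbFill Y q v hq i hn h = h :=
  haveI : HasLiftingProperty (Λ[n, i].ι) q :=
    hq _ (hornInclusions.mk n hn i)
  haveI := pb_snd_lift q v (Λ[n, i].ι)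
  ((CommSq.mk (Y.filler_spec i hn (h ≫ pbSnd q v)).symm :
    CommSq h (Λ[n, i].ι) (pbSnd q v) (Y.filler i hn (h ≫ pbSnd q v)))).fac_left

lemma pbFill_snd {Zc Wc : SSet.{0}} (Y : AlgKan) (q : Zc ⟶ Wc) (v : Y.carrier ⟶ Wc)
    (hq : ∀ ⦃A B : SSet.{0}⦄ (j : A ⟶ B), hornInclusions j → HasLiftingProperty j q)
    {n : ℕ} (i : Fin (n + 1)) (hn : 1 ≤ n) (h : (Λ[n, i] : SSet) ⟶ pb q v) :
    pbFill Y q v hq i hn h ≫ pbSnd q v = Y.filler i hn (h ≫ pbSnd q v) :=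
  haveI : HasLiftingProperty (Λ[n, i].ι) q :=
    hq _ (hornInclusions.mk n hn i)
  haveI := pb_snd_lift q v (Λ[n, i].ι)
  ((CommSq.mk (Y.filler_spec i hn (h ≫ pbSnd q v)).symm :
    CommSq h (Λ[n, i].ι) (pbSnd q v) (Y.filler i hn (h ≫ pbSnd q v)))).fac_right

section PAlgSec

variable {X Y : AlgKan} (f : X ⟶ Y) {Zc Wc : SSet.{0}} (q : Zc ⟶ Wc)
  (v : Y.carrier ⟶ Wc) (u : X.carrier ⟶ Zc) (hsq : u ≫ q = f.map ≫ v)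
  (hq : ∀ ⦃A B : SSet.{0}⦄ (j : A ⟶ B), hornInclusions j → HasLiftingProperty j q)

lemma cancel_pbPair (hmono : Mono f.map) {L : SSet.{0}} {g g' : L ⟶ X.carrier}
    (H : g ≫ pbPair q v u f.map hsq = g' ≫ pbPair q v u f.map hsq) : g = g' := by
  have h2 : g ≫ f.map = g' ≫ f.map := by
    have h3 := congrArg (fun t => t ≫ pbSnd q v) H
    simpa [Category.assoc] using h3
  exact (cancel_mono f.map).1 h2

/-- The pullback, as an algebraic Kan complex, with fillers chosen compatibly with
both `X` (along the pairing) and `Y` (along the second projection). -/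
noncomputable def PAlg (hmono : Mono f.map) : AlgKan where
  carrier := pb q v
  filler n i hn h :=
    if hh : ∃ h' : (Λ[n, i] : SSet) ⟶ X.carrier, h = h' ≫ pbPair q v u f.map hsq
    then X.filler i hn hh.choose ≫ pbPair q v u f.map hsq
    else pbFill Y q v hq i hn h
  filler_spec n i hn h := by
    by_cases hh : ∃ h' : (Λ[n, i] : SSet) ⟶ X.carrier, h = h' ≫ pbPair q v u f.map hsq
    · simp only [dif_pos hh]
      rw [← Category.assoc, X.filler_spec]
      exact hh.choose_spec.symm
    · simp only [dif_neg hh]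
      exact pbFill_comm Y q v hq i hn h

/-- The pairing as a morphism of algebraic Kan complexes. -/
noncomputable def wAlg (hmono : Mono f.map) : X ⟶ PAlg f q v u hsq hq hmono where
  map := pbPair q v u f.map hsq
  preserves n i hn h := by
    have hh : ∃ h' : (Λ[n, i] : SSet) ⟶ X.carrier,
        h ≫ pbPair q v u f.map hsq = h' ≫ pbPair q v u f.map hsq := ⟨h, rfl⟩
    dsimp only [PAlg]
    simp only [dif_pos hh]
    have hc : hh.choose = h := (cancel_pbPair f q v u hsq hmono hh.choose_spec).symm
    rw [hc]

/-- The second projection as a morphism of algebraic Kan complexes. -/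
noncomputable def pbSndAlg (hmono : Mono f.map) : PAlg f q v u hsq hq hmono ⟶ Y where
  map := pbSnd q v
  preserves n i hn h := by
    by_cases hh : ∃ h' : (Λ[n, i] : SSet) ⟶ X.carrier, h = h' ≫ pbPair q v u f.map hsq
    · rw [show (PAlg f q v u hsq hq hmono).filler i hn h =
        X.filler i hn hh.choose ≫ pbPair q v u f.map hsq from dif_pos hh]
      have hc : h ≫ pbSnd q v = hh.choose ≫ f.map := by
        conv_lhs => rw [hh.choose_spec]
        exact (Category.assoc _ _ _).trans (congrArg (fun t => hh.choose ≫ t) (pbPair_snd _ _ _ _ _))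
      exact (Category.assoc _ _ _).trans
        ((congrArg (fun t => X.filler i hn hh.choose ≫ t) (pbPair_snd _ _ _ _ _)).trans
        ((f.preserves i hn hh.choose).trans (congrArg (fun t => Y.filler i hn t) hc.symm)))
    · rw [show (PAlg f q v u hsq hq hmono).filler i hn h = pbFill Y q v hq i hn h from
        dif_neg hh]
      exact pbFill_snd Y q v hq i hn h

end PAlgSec

end Aux

/-- The forgetful functor `U_A` preserves cofibrations and trivial
cofibrations: if `f` is a cofibration in `AlgKan` then `U_A f` is a monomorphism,
and if `f` is a trivial cofibration then `U_A f` is anodyne. -/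
theorem UA_preserves_cofibrations (MA : ModelStructure AlgKan)
    (hAw : ∀ ⦃X Y : AlgKan⦄ (f : X ⟶ Y), MA.weq f ↔ weakHomotopyEquiv (UA.map f))
    (hAf : ∀ ⦃X Y : AlgKan⦄ (f : X ⟶ Y), MA.fib f ↔ kanFibration (UA.map f))
    (hAc : ∀ ⦃X Y : AlgKan⦄ (f : X ⟶ Y),
      MA.cof f ↔ ∀ ⦃Z W : AlgKan⦄ (p : Z ⟶ W), MA.fib p → MA.weq p →
        HasLiftingProperty f p)
    ⦃X Y : AlgKan⦄ (f : X ⟶ Y) :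
    (MA.cof f → Mono (UA.map f)) ∧
    (MA.cof f → MA.weq f → anodyne (UA.map f)) := by
  have hfib : MA.fib (pAlgZT X) := by
    refine (hAf (pAlgZT X)).2 ?_
    intro A B j hj
    cases hj with
    | mk n hn i => exact hasLiftingProperty_toPt _ (horn_app_injective n i)
  have hweqp : MA.weq (pAlgZT X) := by
    refine (hAw (pAlgZT X)).2
      ⟨codisc (optS X.carrier), 𝟙 _, toPt _, ?_, ?_, Category.id_comp _⟩
    · intro A B g _
      exact ⟨fun {t b} sq => ⟨⟨⟨t, Category.id_comp t, sq.w.trans (Category.id_comp b)⟩⟩⟩⟩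
    · intro A B j hj
      cases hj with
      | mk n => exact hasLiftingProperty_toPt _ (boundary_app_injective n)
  have mono_part : MA.cof f → Mono (UA.map f) := by
    intro hcof
    haveI : HasLiftingProperty f (pAlgZT X) := (hAc f).1 hcof (pAlgZT X) hfib hweqp
    have sq : CommSq (uAlg X) f (pAlgZT X) (toTAlg Y) :=
      ⟨AlgKan.Hom.ext (pt_hom_eq _ _)⟩
    have h1 : f.map ≫ sq.lift.map = unitCodisc X.carrier :=
      congrArg AlgKan.Hom.map sq.fac_left
    haveI : Mono (f.map ≫ sq.lift.map) := h1 ▸ mono_unit X.carrier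
    exact mono_of_mono f.map sq.lift.map
  refine ⟨mono_part, fun hcof hweqf => ?_⟩
  intro Zc Wc q hq
  haveI hmono : Mono f.map := mono_part hcof
  constructor
  intro u v sq0
  have hsq : u ≫ q = f.map ≫ v := sq0.w
  have hfibP : MA.fib (pbSndAlg f q v u hsq hq hmono) := by
    refine (hAf _).2 ?_
    intro A B j hj
    haveI := hq j hj
    exact pb_snd_lift q v j
  haveI := MA.lifting_trivCof_fib f (pbSndAlg f q v u hsq hq hmono) hcof hweqf hfibP
  have sqA : CommSq (wAlg f q v u hsq hq hmono) f (pbSndAlg f q v u hsq hq hmono)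
      (𝟙 Y) := ⟨AlgKan.Hom.ext (by simp [wAlg, pbSndAlg]; exact pbPair_snd _ _ _ _ _)⟩
  have hl : f.map ≫ sqA.lift.map = pbPair q v u f.map hsq :=
    congrArg AlgKan.Hom.map sqA.fac_left
  have hr : sqA.lift.map ≫ pbSnd q v = 𝟙 Y.carrier :=
    congrArg AlgKan.Hom.map sqA.fac_right
  exact ⟨⟨{ l := sqA.lift.map ≫ pbFst q v
            fac_left := by
              show f.map ≫ sqA.lift.map ≫ pbFst q v = u
              exact (Category.assoc _ _ _).symm.trans
                ((congrArg (fun t => t ≫ pbFst q v) hl).trans (pbPair_fst _ _ _ _ _))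
            fac_right := by
              exact (Category.assoc _ _ _).trans
                ((congrArg (fun t => sqA.lift.map ≫ t) (pb_w q v)).trans
                ((Category.assoc _ _ _).symm.trans
                ((congrArg (fun t => t ≫ v) hr).trans (Category.id_comp v)))) }⟩⟩

end AlgebraicModels
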